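/- Let σ be a type, L a regular language over the alphabet σ₂, and O the family of σ-caterpillars described by the words of L. Then there exists a σ-structure A such that (O, A) is a homomorphism duality: for every σ-structure B, B admits a homomorphism to A if and only if no member of O admits a homomorphism to B. -/

import Mathlib

/-! Basic framework: relational structures of a finite type `σ` with arities `ar`,
homomorphisms, the binary type/alphabet `σ₂`, the functors `β` and `β*`,
path structures `P_w`, nondeterministic acceptance, and caterpillar notions. -/

/-- A `σ`-structure: a finite universe together with an `ar R`-ary relation for each `R ∈ σ`. -/
structure Str (σ : Type) (ar : σ → ℕ) : Type 1 where
  V : Type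
  finiteV : Finite V
  rel : ∀ R : σ, Set ((Fin (ar R)) → V)

/-- The alphabet (and binary type) `σ₂`: a symbol `R^(i,j)` for each `R ∈ σ` of arity `k`
and each `(i,j) ∈ {1,…,k}²`. -/
abbrev Sig2 (σ : Type) (ar : σ → ℕ) : Type := Σ R : σ, Fin (ar R) × Fin (ar R)

/-- A `σ₂`-structure: a finite universe with a binary relation for each symbol of `σ₂`. -/
structure Str2 (σ : Type) (ar : σ → ℕ) : Type 1 where
  V : Type
  finiteV : Finite V
  rel : Sig2 σ ar → Set (V × V)

variable {σ : Type} [Finite σ] {ar : σ → ℕ}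

/-- Existence of a homomorphism between `σ`-structures. -/
def Str.Hom (A B : Str σ ar) : Prop :=
  ∃ f : A.V → B.V, ∀ (R : σ) (t : Fin (ar R) → A.V), t ∈ A.rel R → (fun i => f (t i)) ∈ B.rel R

/-- Existence of a homomorphism between `σ₂`-structures. -/
def Str2.Hom (X Y : Str2 σ ar) : Prop :=
  ∃ f : X.V → Y.V, ∀ (s : Sig2 σ ar) (p : X.V × X.V), p ∈ X.rel s → (f p.1, f p.2) ∈ Y.rel s

/-- Isomorphism of `σ`-structures. -/
def Str.Iso (A B : Str σ ar) : Prop :=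
  ∃ f : A.V ≃ B.V, ∀ (R : σ) (t : Fin (ar R) → A.V), t ∈ A.rel R ↔ (fun i => f (t i)) ∈ B.rel R

/-- The functor `β`: same universe, `(x_i, x_j) ∈ R^(i,j)(β B)` for each `(x_1,…,x_k) ∈ R(B)`. -/
def strBeta (B : Str σ ar) : Str2 σ ar where
  V := B.V
  finiteV := B.finiteV
  rel := fun s => { p | ∃ t ∈ B.rel s.1, t s.2.1 = p.1 ∧ t s.2.2 = p.2 }

/-- The carrier of `β*(X)⁺`: a copy of each element of `X` together with fresh elements
`x_1, …, x_k` for each `(x,y) ∈ R^(i,j)(X)`. -/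
abbrev PlusCarrier (X : Str2 σ ar) : Type :=
  X.V ⊕ Σ s : Sig2 σ ar, { p : X.V × X.V // p ∈ X.rel s } × Fin (ar s.1)

/-- The identifications generating `∼`: for `(x,y) ∈ R^(i,j)(X)`, identify `x_i` with `x`
and `x_j` with `y`. -/
inductive PreRel (X : Str2 σ ar) : PlusCarrier X → PlusCarrier X → Prop
  | left (s : Sig2 σ ar) (p : { p : X.V × X.V // p ∈ X.rel s }) :
      PreRel X (Sum.inr ⟨s, p, s.2.1⟩) (Sum.inl p.1.1)
  | right (s : Sig2 σ ar) (p : { p : X.V × X.V // p ∈ X.rel s }) :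
      PreRel X (Sum.inr ⟨s, p, s.2.2⟩) (Sum.inl p.1.2)

/-- The functor `β*`, left adjoint to `β`. -/
def strBetaStar (X : Str2 σ ar) : Str σ ar where
  V := Quot (PreRel X)
  finiteV := by
    have : Finite X.V := X.finiteV
    exact Finite.of_surjective (Quot.mk (PreRel X)) (fun q => Quot.exists_rep q)
  rel := fun R => { t | ∃ (i j : Fin (ar R)) (p : X.V × X.V) (hp : p ∈ X.rel ⟨R, (i, j)⟩),
      t = fun m => Quot.mk (PreRel X) (Sum.inr ⟨⟨R, (i, j)⟩, ⟨p, hp⟩, m⟩) }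

/-- The `σ₂`-path `P_w` of a word `w ∈ σ₂*`. -/
def PathStr (w : List (Sig2 σ ar)) : Str2 σ ar where
  V := Fin (w.length + 1)
  finiteV := inferInstance
  rel := fun s => { p | ∃ t : Fin w.length, w.get t = s ∧ p = (t.castSucc, t.succ) }

/-- Acceptance of the word `w` by the `σ₂`-structure `X` viewed as a nondeterministic
automaton with initial states `I` and terminal states `T`. -/
def NAccepts (X : Str2 σ ar) (I T : Set X.V) (w : List (Sig2 σ ar)) : Prop :=
  ∃ f : Fin (w.length + 1) → X.V,
    (∀ (s : Sig2 σ ar) (p : Fin (w.length + 1) × Fin (w.length + 1)),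
        p ∈ (PathStr w).rel s → (f p.1, f p.2) ∈ X.rel s) ∧
    f 0 ∈ I ∧ f (Fin.last w.length) ∈ T

/-! Caterpillars. -/

/-- The blocks (hyperedges) of a `σ`-structure. -/
def Str.Block (A : Str σ ar) : Type := Σ R : σ, { t : Fin (ar R) → A.V // t ∈ A.rel R }

/-- The underlying simple graph of the incidence multigraph `Inc(A)`. -/
def IncGraph (A : Str σ ar) : SimpleGraph (A.V ⊕ A.Block) :=
  SimpleGraph.fromRel (fun u v =>
    ∃ (b : A.Block) (i : Fin (ar b.1)), u = Sum.inl (b.2.1 i) ∧ v = Sum.inr b)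

/-- `a` is a leaf when it has degree one in `Inc(A)`, i.e. there is exactly one
incidence `(block, coordinate)` at `a`. -/
def Str.IsLeaf (A : Str σ ar) (a : A.V) : Prop :=
  Nat.card { e : Σ b : A.Block, Fin (ar b.1) // e.1.2.1 e.2 = a } = 1

/-- A block is pendant when it is incident to at most one non-leaf. -/
def Str.IsPendant (A : Str σ ar) (b : A.Block) : Prop :=
  Set.Subsingleton { a : A.V | ¬ A.IsLeaf a ∧ ∃ i, b.2.1 i = a }

/-- A `σ`-tree: the incidence multigraph is connected, has no cycles and no parallel edges. -/
def Str.IsTreeStr (A : Str σ ar) : Prop :=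
  (∀ b : A.Block, Function.Injective b.2.1) ∧ (IncGraph A).IsTree

/-- A `σ`-path: a `σ`-tree with at most two pendant blocks. -/
def Str.IsPathStr (A : Str σ ar) : Prop :=
  A.IsTreeStr ∧ Nat.card { b : A.Block // A.IsPendant b } ≤ 2

/-- The vertices removed when pruning: leaves attached to pendant blocks only. -/
def Str.Removed (A : Str σ ar) (a : A.V) : Prop :=
  A.IsLeaf a ∧ ∀ b : A.Block, (∃ i, b.2.1 i = a) → A.IsPendant b

/-- The structure obtained by removing all pendant blocks and the leaves attached to them. -/
def prune (A : Str σ ar) : Str σ ar where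
  V := { a : A.V // ¬ A.Removed a }
  finiteV := by have : Finite A.V := A.finiteV; exact inferInstance
  rel := fun R => { t | ∃ (t₀ : Fin (ar R) → A.V) (h₀ : t₀ ∈ A.rel R),
      ¬ A.IsPendant ⟨R, t₀, h₀⟩ ∧ ∀ i, (t i : A.V) = t₀ i }

/-- A `σ`-caterpillar: a `σ`-tree which is a path or becomes one after removing all
pendant blocks and the leaves attached to them. -/
def Str.IsCaterpillar (A : Str σ ar) : Prop :=
  A.IsTreeStr ∧ (A.IsPathStr ∨ (prune A).IsPathStr)

/-! Dualities. -/

/-- `(O, A)` is a homomorphism duality. -/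
def IsDuality (O : Set (Str σ ar)) (A : Str σ ar) : Prop :=
  ∀ B : Str σ ar, B.Hom A ↔ ∀ T ∈ O, ¬ T.Hom B

/-- `A` has caterpillar duality. -/
def HasCatDuality (A : Str σ ar) : Prop :=
  ∃ O : Set (Str σ ar), (∀ T ∈ O, T.IsCaterpillar) ∧ IsDuality O A

/-- `A` has path duality. -/
def HasPathDuality (A : Str σ ar) : Prop :=
  ∃ O : Set (Str σ ar), (∀ T ∈ O, T.IsPathStr) ∧ IsDuality O A

/-! The construction `Γ` on a deterministic automaton. -/

/-- The structure `Γ(D, {q₀}, T)`: universe is the set of subsets of `V(D)` containing `q₀`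
and disjoint from `T`; `(X_1,…,X_k) ∈ R(Γ D)` iff for all `(i,j)` and all `a ∈ X_i`,
every `b` with `(a,b) ∈ R^(i,j)(D)` lies in `X_j`. -/
def GammaStr (D : Str2 σ ar) (q0 : D.V) (T : Set D.V) : Str σ ar where
  V := { X : Set D.V // q0 ∈ X ∧ ∀ x ∈ X, x ∉ T }
  finiteV := by have : Finite D.V := D.finiteV; exact inferInstance
  rel := fun R => { t | ∀ (i j : Fin (ar R)) (a : D.V), a ∈ (t i).1 →
      ∀ b : D.V, (a, b) ∈ D.rel ⟨R, (i, j)⟩ → b ∈ (t j).1 }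

theorem test : True := trivial


/-! ### Auxiliary lemmas for statement 5 -/

section Stmt5Aux

variable {σ : Type} [Finite σ] {ar : σ → ℕ}

/-- Adjunction: `β*(X) → B` iff `X → β(B)`. -/
lemma betaStar_hom_iff (X : Str2 σ ar) (B : Str σ ar) :
    (strBetaStar X).Hom B ↔ X.Hom (strBeta B) := by
  constructor
  · rintro ⟨F, hF⟩
    refine ⟨fun x => F (Quot.mk _ (Sum.inl x)), ?_⟩
    intro s p hp
    have ht : (fun m => Quot.mk (PreRel X) (Sum.inr ⟨s, ⟨p, hp⟩, m⟩)) ∈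
        (strBetaStar X).rel s.1 := ⟨s.2.1, s.2.2, p, hp, rfl⟩
    refine ⟨fun m => F (Quot.mk _ (Sum.inr ⟨s, ⟨p, hp⟩, m⟩)), hF s.1 _ ht, ?_, ?_⟩
    · exact congrArg F (Quot.sound (PreRel.left s ⟨p, hp⟩))
    · exact congrArg F (Quot.sound (PreRel.right s ⟨p, hp⟩))
  · rintro ⟨g, hg⟩
    choose u hu h1 h2 using fun (s : Sig2 σ ar) (p : {p : X.V × X.V // p ∈ X.rel s}) =>
      hg s p.1 p.2
    refine ⟨Quot.lift (Sum.elim g (fun e => u e.1 e.2.1 e.2.2)) ?_, ?_⟩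
    · rintro _ _ (⟨s, p⟩ | ⟨s, p⟩)
      · exact h1 s p
      · exact h2 s p
    · rintro R t ⟨i, j, p, hp, rfl⟩
      exact hu ⟨R, (i, j)⟩ ⟨p, hp⟩

/-- A concrete description of path homomorphisms. -/
def PHom (B : Str σ ar) (w : List (Sig2 σ ar)) (g : ℕ → B.V) : Prop :=
  ∀ t (h : t < w.length), (g t, g (t+1)) ∈ (strBeta B).rel (w[t]'h)

lemma phom_iff (w : List (Sig2 σ ar)) (B : Str σ ar) :
    (strBetaStar (PathStr w)).Hom B ↔ ∃ g : ℕ → B.V, PHom B w g := by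
  rw [betaStar_hom_iff]
  constructor
  · rintro ⟨F, hF⟩
    refine ⟨fun n => F ⟨min n w.length, by omega⟩, ?_⟩
    intro t ht
    have hmem : ((⟨t, ht⟩ : Fin w.length).castSucc, (⟨t, ht⟩ : Fin w.length).succ) ∈
        (PathStr w).rel (w[t]'ht) := ⟨⟨t, ht⟩, rfl, rfl⟩
    have key := hF (w[t]'ht) _ hmem
    have e1 : (⟨min t w.length, by omega⟩ : Fin (w.length + 1)) =
        (⟨t, ht⟩ : Fin w.length).castSucc := by
      ext; simpa using Nat.min_eq_left ht.le
    have e2 : (⟨min (t+1) w.length, by omega⟩ : Fin (w.length + 1)) =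
        (⟨t, ht⟩ : Fin w.length).succ := by
      ext; simpa using Nat.min_eq_left ht
    dsimp only
    rw [e1, e2]
    exact key
  · rintro ⟨g, hg⟩
    refine ⟨fun m => g m.1, ?_⟩
    rintro s p ⟨t, rfl, rfl⟩
    exact hg t.1 t.2

end Stmt5Aux

/-- for every regular language `L` over `σ₂` there is a structure `A` such
that `(O, A)` is a homomorphism duality, where `O` is the family of caterpillars described
by the words of `L`. -/
theorem stmt_5 (σ : Type) [Finite σ] (ar : σ → ℕ) (L : Language (Sig2 σ ar))
    (hL : L.IsRegular) :
    ∃ A : Str σ ar, ∀ B : Str σ ar,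
      B.Hom A ↔ ∀ w ∈ L, ¬ (strBetaStar (PathStr w)).Hom B := by
  obtain ⟨Q, _, M, hM⟩ := hL
  let D : Str2 σ ar := ⟨Q, Finite.of_fintype Q, fun s => {p | p.2 = M.step p.1 s}⟩
  refine ⟨GammaStr D M.start M.accept, fun B => ⟨?_, ?_⟩⟩
  · rintro ⟨f, hf⟩ w hw hhom
    rw [phom_iff] at hhom
    obtain ⟨g, hg⟩ := hhom
    have key : ∀ t, t ≤ w.length → M.evalFrom M.start (w.take t) ∈ (f (g t)).1 := by
      intro t
      induction t with
      | zero => intro _; exact (f (g 0)).2.1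
      | succ t ih =>
        intro ht
        have ht' : t < w.length := ht
        obtain ⟨u, hu, hui, huj⟩ := hg t ht'
        have ihm : M.evalFrom M.start (w.take t) ∈ (f (u (w[t]'ht').2.1)).1 := by
          rw [hui]; exact ih ht'.le
        have step : M.step (M.evalFrom M.start (w.take t)) (w[t]'ht') ∈
            (f (u (w[t]'ht').2.2)).1 := hf (w[t]'ht').1 u hu (w[t]'ht').2.1 (w[t]'ht').2.2 _ ihm
          (M.step (M.evalFrom M.start (w.take t)) (w[t]'ht')) rfl
        rw [huj] at step
        have e : w.take (t+1) = w.take t ++ [w[t]'ht'] := by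
          rw [List.take_succ, List.getElem?_eq_getElem ht']; rfl
        rw [e, DFA.evalFrom_append_singleton]
        exact step
    have hlast := key w.length le_rfl
    rw [List.take_length] at hlast
    exact (f (g w.length)).2.2 _ hlast (by rwa [← hM, DFA.mem_accepts] at hw)
  · intro h
    refine ⟨fun b => ⟨{q | ∃ w g, PHom B w g ∧ M.evalFrom M.start w = q ∧ g w.length = b},
      ⟨[], fun _ => b, fun t ht => absurd ht (Nat.not_lt_zero t), rfl, rfl⟩, ?_⟩, ?_⟩
    · rintro q ⟨w, g, hg, hev, -⟩ hq
      refine h w ?_ ((phom_iff w B).2 ⟨g, hg⟩)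
      rw [← hM, DFA.mem_accepts]
      show M.evalFrom M.start w ∈ M.accept
      rw [hev]; exact hq
    · intro R t ht i j a ha b hb
      obtain ⟨w, g, hg, hev, hend⟩ := ha
      have hb' : b = M.step a ⟨R, (i, j)⟩ := hb
      refine ⟨w ++ [⟨R, (i, j)⟩], fun n => if n ≤ w.length then g n else t j, ?_, ?_, ?_⟩
      · intro t' ht'
        dsimp only
        rcases Nat.lt_or_ge t' w.length with hc | hc
        · have e : (w ++ [(⟨R, (i, j)⟩ : Sig2 σ ar)])[t']'ht' = w[t']'hc :=
            List.getElem_append_left hc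
          rw [e, if_pos hc.le, if_pos (show t'+1 ≤ w.length from hc)]
          exact hg t' hc
        · obtain rfl : t' = w.length := by
            have : t' < w.length + 1 := by simpa using ht'
            omega
          have e : (w ++ [(⟨R, (i, j)⟩ : Sig2 σ ar)])[w.length]'ht' = ⟨R, (i, j)⟩ :=
            List.getElem_concat_length rfl _
          rw [e, if_pos le_rfl, if_neg (by omega)]
          exact ⟨t, ht, hend.symm, rfl⟩
      · rw [DFA.evalFrom_append_singleton, hev, hb']
      · simp
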